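/- arXiv:2405.19372 — 2 statements merged into one kernel-verified Lean document; each statement's English description precedes it below -/
import Mathlib

section
/- Let ζ > 1, r ≥ 0 and η a point of the unit circle. Set ζ₊ = (ζ+1)e^{2r} − 1. Then for every z in the non-tangential region Γ_ζ(η), the hyperbolic disc D(z,r) is contained in Γ_{ζ₊}(η); that is, every w ∈ 𝔻 with β(z,w) < r satisfies |w − η| < ζ₊(1 − |w|²). -/
noncomputable def pseudoDist (z w : ℂ) : ℝ :=
  ‖z - w‖ / ‖1 - (starRingEnd ℂ) z * w‖

/-- Hyperbolic (Poincaré) metric on the unit disc. -/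
noncomputable def hypDist (z w : ℂ) : ℝ :=
  (1 / 2) * Real.log ((1 + pseudoDist z w) / (1 - pseudoDist z w))

theorem stmt1 (ζ r : ℝ) (hζ : 1 < ζ) (hr : 0 ≤ r) (η : ℂ) (hη : ‖η‖ = 1)
    (ζp : ℝ) (hζp : ζp = (ζ + 1) * Real.exp (2 * r) - 1) :
    ∀ z : ℂ, ‖z‖ < 1 → ‖z - η‖ < ζ * (1 - ‖z‖ ^ 2) →
      ∀ w : ℂ, ‖w‖ < 1 → hypDist z w < r → ‖w - η‖ < ζp * (1 - ‖w‖ ^ 2) := by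
  intro z hz hzη w hw hd
  set A : ℝ := ‖1 - (starRingEnd ℂ) z * w‖ with hA
  set B : ℝ := ‖z - w‖ with hB
  have hu : 0 < 1 - ‖z‖ ^ 2 := by nlinarith [norm_nonneg z]
  have hv : 0 < 1 - ‖w‖ ^ 2 := by nlinarith [norm_nonneg w]
  have hB0 : 0 ≤ B := norm_nonneg _
  have key : A ^ 2 - B ^ 2 = (1 - ‖z‖ ^ 2) * (1 - ‖w‖ ^ 2) := by
    simp only [hA, hB, Complex.sq_norm]
    simp only [ Complex.normSq_apply, Complex.sub_re, Complex.sub_im,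
      Complex.mul_re, Complex.mul_im, Complex.one_re, Complex.one_im,
      Complex.conj_re, Complex.conj_im]
    ring
  have hBA : B < A := by nlinarith [key, mul_pos hu hv, hB0, norm_nonneg (1 - (starRingEnd ℂ) z * w)]
  have hA0 : 0 < A := lt_of_le_of_lt hB0 hBA
  -- A - B ≤ 1 - ‖w‖^2
  have h1 : A ≤ (1 - ‖w‖ ^ 2) + B := by
    have e : 1 - (starRingEnd ℂ) z * w
        = ((1 - ‖w‖ ^ 2 : ℝ) : ℂ) + (starRingEnd ℂ) (w - z) * w := by
      have : ((‖w‖ ^ 2 : ℝ) : ℂ) = (starRingEnd ℂ) w * w := by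
        rw [mul_comm, Complex.mul_conj, Complex.sq_norm]
      rw [map_sub]
      push_cast [this]
      ring
    calc A = ‖((1 - ‖w‖ ^ 2 : ℝ) : ℂ) + (starRingEnd ℂ) (w - z) * w‖ := by rw [hA, e]
    _ ≤ ‖((1 - ‖w‖ ^ 2 : ℝ) : ℂ)‖ + ‖(starRingEnd ℂ) (w - z) * w‖ := norm_add_le _ _
    _ ≤ (1 - ‖w‖ ^ 2) + B := by
        rw [Complex.norm_real, norm_mul, RCLike.norm_conj, Real.norm_eq_abs, abs_of_pos hv]
        have h := mul_le_of_le_one_right (norm_nonneg (z - w)) hw.le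
        rw [norm_sub_rev w z, hB]
        linarith
  -- convert hypDist hypothesis
  have hρ : pseudoDist z w = B / A := by
    simp [pseudoDist, hA, hB]
  have hE : A + B < Real.exp (2 * r) * (A - B) := by
    have hX : (0:ℝ) < (1 + B / A) / (1 - B / A) := by
      apply div_pos
      · positivity
      · rw [sub_pos]; exact (div_lt_one hA0).mpr hBA
    have hlog : Real.log ((1 + B / A) / (1 - B / A)) < 2 * r := by
      have := hd
      rw [hypDist, hρ] at this
      linarith
    have hXlt : (1 + B / A) / (1 - B / A) < Real.exp (2 * r) :=
      (Real.log_lt_iff_lt_exp hX).mp hlog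
    have heq : (1 + B / A) / (1 - B / A) = (A + B) / (A - B) := by
      field_simp
    rw [heq] at hXlt
    exact (div_lt_iff₀ (by linarith)).mp hXlt
  set E := Real.exp (2 * r) with hEdef
  have hE1 : 1 ≤ E := by
    rw [hEdef]
    calc (1:ℝ) = Real.exp 0 := (Real.exp_zero).symm
    _ ≤ Real.exp (2 * r) := Real.exp_le_exp.mpr (by linarith)
  have hABv : A - B ≤ 1 - ‖w‖ ^ 2 := by linarith
  have huAB : 1 - ‖z‖ ^ 2 ≤ A + B := by
    have h2 : (1 - ‖z‖ ^ 2) * (1 - ‖w‖ ^ 2) ≤ (A + B) * (1 - ‖w‖ ^ 2) := by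
      nlinarith
    exact le_of_mul_le_mul_right h2 hv
  have huE : 1 - ‖z‖ ^ 2 < E * (1 - ‖w‖ ^ 2) := by
    calc 1 - ‖z‖ ^ 2 ≤ A + B := huAB
    _ < E * (A - B) := hE
    _ ≤ E * (1 - ‖w‖ ^ 2) := by
        apply mul_le_mul_of_nonneg_left hABv (by linarith)
  have hBv : 2 * B < (E - 1) * (1 - ‖w‖ ^ 2) + (E - 1) * (1 - ‖w‖ ^ 2) := by
    nlinarith
  have htri : ‖w - η‖ ≤ ‖z - η‖ + B := by
    calc ‖w - η‖ = ‖(z - η) - (z - w)‖ := by ring_nf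
    _ ≤ ‖z - η‖ + ‖z - w‖ := norm_sub_le _ _
  rw [hζp]
  have hζ0 : 0 < ζ := by linarith
  nlinarith [mul_lt_mul_of_pos_left huE hζ0, htri, hzη, hBv, hv]
end

section
/- Let 1 ≤ p < ∞, 1 < q < ∞, and let Z = {a_j} be an (r,κ)-lattice in 𝔻. For sequences {c_j} ∈ T_p^q(Z) and {d_j} ∈ T_{p'}^{q'}(Z) (where p', q' are conjugate exponents), the pairing ⟨{c_j},{d_j}⟩ = Σ_j c_j d_j (1−|a_j|²) converges absolutely and satisfies |⟨{c_j},{d_j}⟩| ≤ C ‖{c_j}‖_{T_p^q(Z)} ‖{d_j}‖_{T_{p'}^{q'}(Z)} for a constant C independent of the sequences. -/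
open MeasureTheory ENNReal

set_option maxHeartbeats 1000000

/-- Hyperbolic disc of radius `s` centered at `z`. -/
def hypDisc (z : ℂ) (s : ℝ) : Set ℂ := {w : ℂ | ‖w‖ < 1 ∧ hypDist z w < s}

/-- An `(r,κ)`-lattice: points of the unit disc whose hyperbolic `r`-discs cover the disc
and whose hyperbolic `κ`-discs are pairwise disjoint. -/
def IsLattice (a : ℕ → ℂ) (r κ : ℝ) : Prop :=
  (∀ j, ‖a j‖ < 1) ∧ (∀ z : ℂ, ‖z‖ < 1 → ∃ j, hypDist (a j) z < r) ∧
    Pairwise fun i j => Disjoint (hypDisc (a i) κ) (hypDisc (a j) κ)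

/-- Non-tangential approach region `Γ_ζ(η)`. -/
def ntRegion (ζ : ℝ) (η : ℂ) : Set ℂ := {z : ℂ | ‖z‖ < 1 ∧ ‖z - η‖ < ζ * (1 - ‖z‖ ^ 2)}

/-- Point `e^{iθ}` of the unit circle. -/
noncomputable def circlePt (θ : ℝ) : ℂ := Complex.exp (θ * Complex.I)

/-- Carleson box `S(u)`. -/
noncomputable def carlesonBox (u : ℂ) : Set ℂ :=
  if u = 0 then Metric.ball 0 1 else
    {w : ℂ | ‖u‖ ≤ ‖w‖ ∧ ‖w‖ < 1 ∧ |Complex.arg (w * (starRingEnd ℂ) u)| ≤ (1 - ‖u‖) / 2}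

/-- `ℓ^p`-type sum of a sequence of extended nonnegative reals, with `p = ∞` giving the sup. -/
noncomputable def lpSum (p : ℝ≥0∞) (s : ℕ → ℝ≥0∞) : ℝ≥0∞ :=
  if p = ∞ then ⨆ j, s j else (∑' j, s j ^ p.toReal) ^ (1 / p.toReal)

/-- Norm of the sequence tent space `T_p^q(Z)` with aperture `ζ` and lattice `a`,
allowing `p = ∞` (sup version) and `q = ∞` (Carleson version). -/
noncomputable def tentSeqNorm (ζ : ℝ) (a : ℕ → ℂ) (p q : ℝ≥0∞) (x : ℕ → ℂ) : ℝ≥0∞ :=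
  if q = ∞ then
    (if p = ∞ then
      essSup (fun θ : ℝ => ⨆ j, Set.indicator (ntRegion ζ (circlePt θ))
          (fun _ => (‖x j‖₊ : ℝ≥0∞)) (a j))
        (volume.restrict (Set.Ioc (0 : ℝ) (2 * Real.pi)))
    else
      essSup (fun θ : ℝ => ⨆ u ∈ ntRegion ζ (circlePt θ),
          ((1 - (‖u‖₊ : ℝ≥0∞) ^ 2)⁻¹ *
            ∑' j, Set.indicator (carlesonBox u)
              (fun _ => (‖x j‖₊ : ℝ≥0∞) ^ p.toReal * (1 - (‖a j‖₊ : ℝ≥0∞) ^ 2)) (a j)) ^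
            (1 / p.toReal))
        (volume.restrict (Set.Ioc (0 : ℝ) (2 * Real.pi))))
  else
    (∫⁻ θ in Set.Ioc (0 : ℝ) (2 * Real.pi),
        (lpSum p fun j => Set.indicator (ntRegion ζ (circlePt θ))
          (fun _ => (‖x j‖₊ : ℝ≥0∞)) (a j)) ^ q.toReal) ^ (1 / q.toReal)

/-- Hardy space (quasi)norm `‖f‖_{H^p}` as an extended nonnegative real. -/
noncomputable def hardyNorm (p : ℝ) (f : ℂ → ℂ) : ℝ≥0∞ :=
  (⨆ r ∈ Set.Ico (0 : ℝ) 1,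
      (∫⁻ θ in Set.Ioc (0 : ℝ) (2 * Real.pi),
        (‖f (r * circlePt θ)‖₊ : ℝ≥0∞) ^ p) / ENNReal.ofReal (2 * Real.pi)) ^ (1 / p)

lemma norm_circlePt (θ : ℝ) : ‖circlePt θ‖ = 1 := by
  simp [circlePt, Complex.norm_exp]

lemma norm_exp_I_sub_one_le (x : ℝ) : ‖Complex.exp (Complex.ofReal x * Complex.I) - 1‖ ≤ |x| := by
  have h1 : Complex.exp (Complex.ofReal x * Complex.I) - 1
      = Complex.ofReal (Real.cos x - 1) + Complex.ofReal (Real.sin x) * Complex.I := by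
    rw [Complex.exp_mul_I, ← Complex.ofReal_cos, ← Complex.ofReal_sin]
    push_cast; ring
  rw [h1, Complex.norm_add_mul_I]
  have hb : (Real.cos x - 1) ^ 2 + Real.sin x ^ 2 ≤ x ^ 2 := by
    nlinarith [Real.one_sub_sq_div_two_le_cos (x := x), Real.sin_sq_add_cos_sq x,
      Real.cos_le_one x]
  calc Real.sqrt ((Real.cos x - 1) ^ 2 + Real.sin x ^ 2) ≤ Real.sqrt (x ^ 2) :=
        Real.sqrt_le_sqrt hb
    _ = |x| := Real.sqrt_sq_eq_abs x

lemma dist_circlePt (θ1 θ2 : ℝ) : ‖circlePt θ1 - circlePt θ2‖ ≤ |θ1 - θ2| := by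
  have h : circlePt θ2 * Complex.exp (Complex.ofReal (θ1 - θ2) * Complex.I) = circlePt θ1 := by
    unfold circlePt
    rw [← Complex.exp_add]
    congr 1
    push_cast; ring
  have h2 : circlePt θ1 - circlePt θ2
      = circlePt θ2 * (Complex.exp (Complex.ofReal (θ1 - θ2) * Complex.I) - 1) := by
    rw [mul_sub, mul_one, h]
  rw [h2, norm_mul, norm_circlePt, one_mul]
  exact norm_exp_I_sub_one_le (θ1 - θ2)

lemma exists_theta0 (z : ℂ) (hz : ‖z‖ < 1) :
    ∃ θ0 ∈ Set.Ioc (0:ℝ) (2 * Real.pi), ‖z - circlePt θ0‖ ≤ 1 - ‖z‖ := by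
  by_cases h0 : z = 0
  · refine ⟨Real.pi, ⟨Real.pi_pos, by linarith [Real.pi_pos]⟩, ?_⟩
    simp only [h0, zero_sub, norm_neg, norm_zero, sub_zero, norm_circlePt]
    exact le_refl 1
  · have harg1 := Complex.neg_pi_lt_arg z
    have harg2 := Complex.arg_le_pi z
    have hπ := Real.pi_pos
    set θ1 := Complex.arg z with hθ1
    have hcirc : circlePt (if 0 < θ1 then θ1 else θ1 + 2 * Real.pi) = Complex.exp (θ1 * Complex.I) := by
      split
      · rfl
      · unfold circlePt
        have : (Complex.ofReal (θ1 + 2 * Real.pi)) * Complex.I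
            = Complex.ofReal θ1 * Complex.I + 2 * Real.pi * Complex.I := by push_cast; ring
        rw [this, Complex.exp_add, Complex.exp_two_pi_mul_I, mul_one]
    refine ⟨if 0 < θ1 then θ1 else θ1 + 2 * Real.pi, ?_, ?_⟩
    · split <;> constructor <;> [skip; linarith; linarith; linarith]
      next h => exact h
    · rw [hcirc]
      have hz' : z = Complex.ofReal ‖z‖ * Complex.exp (θ1 * Complex.I) :=
        (Complex.norm_mul_exp_arg_mul_I z).symm
      have : z - Complex.exp (θ1 * Complex.I)
          = (Complex.ofReal ‖z‖ - 1) * Complex.exp (θ1 * Complex.I) := by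
        rw [sub_mul, one_mul, ← hz']
      rw [this, norm_mul]
      have he : ‖Complex.exp (Complex.ofReal θ1 * Complex.I)‖ = 1 := norm_circlePt θ1
      rw [he, mul_one]
      have : ‖(Complex.ofReal ‖z‖ - 1 : ℂ)‖ = |‖z‖ - 1| := by
        rw [show (Complex.ofReal ‖z‖ - 1 : ℂ) = Complex.ofReal (‖z‖ - 1) by push_cast; ring,
          Complex.norm_real, Real.norm_eq_abs]
      rw [this, abs_of_nonpos (by linarith)]
      simp

lemma geom_lemma {ζ : ℝ} (hζ : 1 < ζ) {z : ℂ} (hz : ‖z‖ < 1) :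
    ENNReal.ofReal (min (ζ - 1) Real.pi * (1 - ‖z‖ ^ 2)) ≤
      ∫⁻ θ in Set.Ioc (0:ℝ) (2 * Real.pi),
        Set.indicator (ntRegion ζ (circlePt θ)) (fun _ => (1:ℝ≥0∞)) z := by
  have hπ := Real.pi_pos
  have hz0 := norm_nonneg z
  set t := 1 - ‖z‖ ^ 2 with htdef
  have ht0 : 0 < t := by nlinarith
  have ht1 : t ≤ 1 := by nlinarith
  obtain ⟨θ0, hθ0mem, hθ0⟩ := exists_theta0 z hz
  set δ := min ((ζ - 1) * t) Real.pi with hδdef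
  have hδ0 : 0 < δ := lt_min (by nlinarith) hπ
  have hδπ : δ ≤ Real.pi := min_le_right _ _
  have key : ∀ θ : ℝ, |θ - θ0| < δ → z ∈ ntRegion ζ (circlePt θ) := by
    intro θ h
    refine ⟨hz, ?_⟩
    have h1 : ‖z - circlePt θ‖ ≤ ‖z - circlePt θ0‖ + ‖circlePt θ0 - circlePt θ‖ := by
      calc ‖z - circlePt θ‖ = ‖(z - circlePt θ0) + (circlePt θ0 - circlePt θ)‖ := by ring_nf
        _ ≤ _ := norm_add_le _ _
    have h2 := dist_circlePt θ0 θ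
    have h3 : |θ0 - θ| < δ := by rw [abs_sub_comm]; exact h
    have h4 : 1 - ‖z‖ ≤ t := by nlinarith
    have h5 : δ ≤ (ζ - 1) * t := min_le_left _ _
    calc ‖z - circlePt θ‖ ≤ (1 - ‖z‖) + |θ0 - θ| := by linarith
      _ < t + (ζ - 1) * t := by linarith
      _ = ζ * (1 - ‖z‖ ^ 2) := by rw [← htdef]; ring
  obtain ⟨J, hJmeas, hJsub, hJvol⟩ : ∃ J : Set ℝ, MeasurableSet J ∧
      (J ⊆ Set.Ioc 0 (2 * Real.pi) ∧ ∀ θ ∈ J, z ∈ ntRegion ζ (circlePt θ)) ∧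
      ENNReal.ofReal δ ≤ volume J := by
    by_cases hc : δ ≤ θ0
    · refine ⟨Set.Ioc (θ0 - δ) θ0, measurableSet_Ioc, ⟨?_, ?_⟩, ?_⟩
      · intro θ hθ
        exact ⟨by linarith [hθ.1, hθ0mem.1], le_trans hθ.2 hθ0mem.2⟩
      · intro θ hθ
        exact key θ (abs_lt.2 ⟨by linarith [hθ.1], by linarith [hθ.2]⟩)
      · rw [Real.volume_Ioc]
        exact ofReal_le_ofReal (by linarith)
    · push_neg at hc
      refine ⟨Set.Ico θ0 (θ0 + δ), measurableSet_Ico, ⟨?_, ?_⟩, ?_⟩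
      · intro θ hθ
        exact ⟨lt_of_lt_of_le hθ0mem.1 hθ.1, by linarith [hθ.2]⟩
      · intro θ hθ
        exact key θ (abs_lt.2 ⟨by linarith [hθ.1], by linarith [hθ.2]⟩)
      · rw [Real.volume_Ico]
        exact ofReal_le_ofReal (by linarith)
  have hmin : min (ζ - 1) Real.pi * t ≤ δ := by
    refine le_min ?_ ?_
    · exact mul_le_mul_of_nonneg_right (min_le_left _ _) ht0.le
    · calc min (ζ - 1) Real.pi * t ≤ Real.pi * t :=
          mul_le_mul_of_nonneg_right (min_le_right _ _) ht0.le
        _ ≤ Real.pi * 1 := by nlinarith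
        _ = Real.pi := mul_one _
  calc ENNReal.ofReal (min (ζ - 1) Real.pi * t) ≤ ENNReal.ofReal δ := ofReal_le_ofReal hmin
    _ ≤ volume J := hJvol
    _ = ∫⁻ _ in J, 1 := (setLIntegral_one J).symm
    _ ≤ ∫⁻ θ in J, Set.indicator (ntRegion ζ (circlePt θ)) (fun _ => (1:ℝ≥0∞)) z := by
        refine lintegral_mono_ae ((ae_restrict_iff' hJmeas).2 (ae_of_all _ fun θ hθ => ?_))
        rw [Set.indicator_of_mem (hJsub.2 θ hθ)]
    _ ≤ _ := lintegral_mono' (Measure.restrict_mono hJsub.1 le_rfl) le_rfl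

lemma meas_ind {ζ : ℝ} (w : ℂ) (v : ℝ≥0∞) :
    Measurable fun θ : ℝ => Set.indicator (ntRegion ζ (circlePt θ)) (fun _ => v) w := by
  have h : (fun θ : ℝ => Set.indicator (ntRegion ζ (circlePt θ)) (fun _ => v) w) =
      Set.indicator {θ : ℝ | w ∈ ntRegion ζ (circlePt θ)} (fun _ => v) := by
    ext θ
    by_cases hw : w ∈ ntRegion ζ (circlePt θ) <;> simp [Set.indicator_apply, hw]
  rw [h]
  refine Measurable.indicator measurable_const ?_
  have hset : {θ : ℝ | w ∈ ntRegion ζ (circlePt θ)}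
      = {θ : ℝ | ‖w‖ < 1} ∩ {θ : ℝ | ‖w - circlePt θ‖ < ζ * (1 - ‖w‖ ^ 2)} := by
    ext θ; simp [ntRegion, Set.mem_setOf_eq, Set.mem_inter_iff]
  rw [hset]
  refine MeasurableSet.inter ?_ ?_
  · by_cases h1 : ‖w‖ < 1 <;> simp [h1]
  · refine (isOpen_lt ?_ continuous_const).measurableSet
    exact (continuous_const.sub
      (Complex.continuous_exp.comp (Complex.continuous_ofReal.mul continuous_const))).norm

lemma meas_lp {ζ : ℝ} (a : ℕ → ℂ) (p : ℝ≥0∞) (x : ℕ → ℂ) :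
    Measurable fun θ : ℝ => lpSum p (fun j =>
      Set.indicator (ntRegion ζ (circlePt θ)) (fun _ => (‖x j‖₊ : ℝ≥0∞)) (a j)) := by
  unfold lpSum
  split
  · exact Measurable.iSup fun j => meas_ind _ _
  · exact (Measurable.ennreal_tsum fun j => (meas_ind _ _).pow_const _).pow_const _

lemma conj_facts {p p' : ℝ≥0∞} (hp1 : 1 < p) (hpt : p ≠ ∞) (hpc : 1 / p + 1 / p' = 1) :
    p' ≠ ∞ ∧ p' ≠ 0 ∧ p.toReal.HolderConjugate p'.toReal := by
  have hp0 : p ≠ 0 := (lt_trans zero_lt_one hp1).ne'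
  have hp'top : p' ≠ ∞ := by
    intro h
    rw [h] at hpc
    simp only [one_div, ENNReal.inv_top, add_zero, ENNReal.inv_eq_one] at hpc
    exact hp1.ne' hpc
  have hp'0 : p' ≠ 0 := by
    intro h
    rw [h] at hpc
    simp at hpc
  have h1 : 1 < p.toReal := by
    have := (ENNReal.toReal_lt_toReal (by simp) hpt).2 hp1
    simpa using this
  have h2 : p.toReal⁻¹ + p'.toReal⁻¹ = 1 := by
    have := congrArg ENNReal.toReal hpc
    rw [ENNReal.toReal_add (by simp [hp0]) (by simp [hp'0]), one_div, one_div,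
      ENNReal.toReal_inv, ENNReal.toReal_inv, ENNReal.toReal_one] at this
    exact this
  exact ⟨hp'top, hp'0, Real.holderConjugate_iff.mpr ⟨h1, h2⟩⟩

lemma holder_tsum {p p' : ℝ≥0∞} (hp : 1 ≤ p) (hpt : p ≠ ∞) (hpc : 1 / p + 1 / p' = 1)
    (f g : ℕ → ℝ≥0∞) : (∑' j, f j * g j) ≤ lpSum p f * lpSum p' g := by
  rcases eq_or_lt_of_le hp with h1 | h1
  · -- p = 1, p' = ∞
    obtain rfl : p = 1 := h1.symm
    have hp' : p' = ∞ := by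
      have h0 : (1:ℝ≥0∞) + 1 / p' = 1 := by simpa using hpc
      have hz : 1 / p' = 0 := by
        by_contra hcon
        exact absurd (h0 ▸ ENNReal.lt_add_right one_ne_top hcon) (lt_irrefl 1)
      rwa [one_div, ENNReal.inv_eq_zero] at hz
    subst hp'
    simp only [lpSum, if_neg one_ne_top, if_pos rfl, ENNReal.toReal_one, ENNReal.rpow_one,
      one_div_one]
    calc (∑' j, f j * g j) ≤ ∑' j, f j * ⨆ i, g i :=
          ENNReal.tsum_le_tsum fun j => mul_le_mul_right (le_iSup g j) _
      _ = (∑' j, f j) * ⨆ i, g i := ENNReal.tsum_mul_right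
  · obtain ⟨hp't, hp'0, hconj⟩ := conj_facts h1 hpt hpc
    simp only [lpSum, if_neg hpt, if_neg hp't]
    calc (∑' j, f j * g j) = ∫⁻ j, (f * g) j ∂Measure.count := by
          rw [MeasureTheory.lintegral_count]; rfl
      _ ≤ (∫⁻ j, f j ^ p.toReal ∂Measure.count) ^ (1 / p.toReal) *
            (∫⁻ j, g j ^ p'.toReal ∂Measure.count) ^ (1 / p'.toReal) :=
          ENNReal.lintegral_mul_le_Lp_mul_Lq _ hconj measurable_from_nat.aemeasurable
            measurable_from_nat.aemeasurable
      _ = _ := by rw [MeasureTheory.lintegral_count, MeasureTheory.lintegral_count]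


lemma ind_mul (S : Set ℂ) (w : ℂ) (u v : ℝ≥0∞) :
    u * v * Set.indicator S (fun _ => (1:ℝ≥0∞)) w
      = Set.indicator S (fun _ => u) w * Set.indicator S (fun _ => v) w := by
  by_cases h : w ∈ S <;> simp [h]

theorem stmt4 (p q p' q' : ℝ≥0∞) (hp : 1 ≤ p) (hp' : p ≠ ∞) (hq : 1 < q) (hq' : q ≠ ∞)
    (hpc : 1 / p + 1 / p' = 1) (hqc : 1 / q + 1 / q' = 1)
    (ζ r κ : ℝ) (hζ : 1 < ζ) (hκ : 0 < κ) (hκr : κ < r)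
    (a : ℕ → ℂ) (ha : IsLattice a r κ) :
    ∃ C : ℝ≥0∞, C ≠ ∞ ∧ ∀ c d : ℕ → ℂ,
      tentSeqNorm ζ a p q c ≠ ∞ → tentSeqNorm ζ a p' q' d ≠ ∞ →
      Summable (fun j => ‖c j‖ * ‖d j‖ * (1 - ‖a j‖ ^ 2)) ∧
      (‖∑' j, c j * d j * ((1 : ℂ) - (‖a j‖ : ℂ) ^ 2)‖₊ : ℝ≥0∞) ≤
        C * tentSeqNorm ζ a p q c * tentSeqNorm ζ a p' q' d := by
  have hlat1 := ha.1
  have hπ := Real.pi_pos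
  set c0 := min (ζ - 1) Real.pi with hc0def
  have hc0 : 0 < c0 := lt_min (by linarith) hπ
  refine ⟨ENNReal.ofReal c0⁻¹, ENNReal.ofReal_ne_top, fun c d hcN hdN => ?_⟩
  obtain ⟨hq't, hq'0, hqconj⟩ := conj_facts hq hq' hqc
  have hnn : ∀ j, (0:ℝ) ≤ 1 - ‖a j‖ ^ 2 := fun j => by nlinarith [hlat1 j, norm_nonneg (a j)]
  have key : (∑' j, (‖c j‖₊ : ℝ≥0∞) * (‖d j‖₊ : ℝ≥0∞) * ENNReal.ofReal (1 - ‖a j‖ ^ 2))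
      ≤ ENNReal.ofReal c0⁻¹ * tentSeqNorm ζ a p q c * tentSeqNorm ζ a p' q' d := by
    have step1 : ∀ j, ENNReal.ofReal (1 - ‖a j‖ ^ 2) ≤ ENNReal.ofReal c0⁻¹ *
        ∫⁻ θ in Set.Ioc (0:ℝ) (2 * Real.pi),
          Set.indicator (ntRegion ζ (circlePt θ)) (fun _ => (1:ℝ≥0∞)) (a j) := by
      intro j
      have hg := geom_lemma hζ (hlat1 j)
      calc ENNReal.ofReal (1 - ‖a j‖ ^ 2)
          = ENNReal.ofReal c0⁻¹ * ENNReal.ofReal (c0 * (1 - ‖a j‖ ^ 2)) := by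
            rw [← ENNReal.ofReal_mul (by positivity)]
            congr 1
            field_simp
        _ ≤ _ := mul_le_mul_right hg _
    have step2 : ∀ j, (‖c j‖₊ : ℝ≥0∞) * (‖d j‖₊ : ℝ≥0∞) *
        (ENNReal.ofReal c0⁻¹ * ∫⁻ θ in Set.Ioc (0:ℝ) (2 * Real.pi),
          Set.indicator (ntRegion ζ (circlePt θ)) (fun _ => (1:ℝ≥0∞)) (a j))
        = ENNReal.ofReal c0⁻¹ * ∫⁻ θ in Set.Ioc (0:ℝ) (2 * Real.pi),
            Set.indicator (ntRegion ζ (circlePt θ)) (fun _ => (‖c j‖₊ : ℝ≥0∞)) (a j) *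
            Set.indicator (ntRegion ζ (circlePt θ)) (fun _ => (‖d j‖₊ : ℝ≥0∞)) (a j) := by
      intro j
      rw [mul_left_comm]
      congr 1
      rw [← lintegral_const_mul _ (meas_ind (a j) 1)]
      exact lintegral_congr fun θ => ind_mul _ _ _ _
    calc (∑' j, (‖c j‖₊ : ℝ≥0∞) * (‖d j‖₊ : ℝ≥0∞) * ENNReal.ofReal (1 - ‖a j‖ ^ 2))
        ≤ ∑' j, (‖c j‖₊ : ℝ≥0∞) * (‖d j‖₊ : ℝ≥0∞) *
            (ENNReal.ofReal c0⁻¹ * ∫⁻ θ in Set.Ioc (0:ℝ) (2 * Real.pi),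
              Set.indicator (ntRegion ζ (circlePt θ)) (fun _ => (1:ℝ≥0∞)) (a j)) :=
          ENNReal.tsum_le_tsum fun j => mul_le_mul_right (step1 j) _
      _ = ENNReal.ofReal c0⁻¹ * ∑' j, ∫⁻ θ in Set.Ioc (0:ℝ) (2 * Real.pi),
            Set.indicator (ntRegion ζ (circlePt θ)) (fun _ => (‖c j‖₊ : ℝ≥0∞)) (a j) *
            Set.indicator (ntRegion ζ (circlePt θ)) (fun _ => (‖d j‖₊ : ℝ≥0∞)) (a j) := by
          rw [← ENNReal.tsum_mul_left]
          exact tsum_congr step2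
      _ = ENNReal.ofReal c0⁻¹ * ∫⁻ θ in Set.Ioc (0:ℝ) (2 * Real.pi),
            ∑' j, Set.indicator (ntRegion ζ (circlePt θ)) (fun _ => (‖c j‖₊ : ℝ≥0∞)) (a j) *
            Set.indicator (ntRegion ζ (circlePt θ)) (fun _ => (‖d j‖₊ : ℝ≥0∞)) (a j) := by
          rw [lintegral_tsum (f := fun j θ => Set.indicator (ntRegion ζ (circlePt θ)) (fun _ => (‖c j‖₊ : ℝ≥0∞)) (a j) *
              Set.indicator (ntRegion ζ (circlePt θ)) (fun _ => (‖d j‖₊ : ℝ≥0∞)) (a j))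
              fun j => ((meas_ind (a j) _).mul (meas_ind (a j) _)).aemeasurable]
      _ ≤ ENNReal.ofReal c0⁻¹ * ∫⁻ θ in Set.Ioc (0:ℝ) (2 * Real.pi),
            (lpSum p fun j => Set.indicator (ntRegion ζ (circlePt θ))
              (fun _ => (‖c j‖₊ : ℝ≥0∞)) (a j)) *
            (lpSum p' fun j => Set.indicator (ntRegion ζ (circlePt θ))
              (fun _ => (‖d j‖₊ : ℝ≥0∞)) (a j)) := by
          gcongr with θ
          exact holder_tsum hp hp' hpc _ _
      _ ≤ ENNReal.ofReal c0⁻¹ *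
            ((∫⁻ θ in Set.Ioc (0:ℝ) (2 * Real.pi),
              (lpSum p fun j => Set.indicator (ntRegion ζ (circlePt θ))
                (fun _ => (‖c j‖₊ : ℝ≥0∞)) (a j)) ^ q.toReal) ^ (1 / q.toReal) *
             (∫⁻ θ in Set.Ioc (0:ℝ) (2 * Real.pi),
              (lpSum p' fun j => Set.indicator (ntRegion ζ (circlePt θ))
                (fun _ => (‖d j‖₊ : ℝ≥0∞)) (a j)) ^ q'.toReal) ^ (1 / q'.toReal)) := by
          gcongr
          exact ENNReal.lintegral_mul_le_Lp_mul_Lq _ hqconj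
            (meas_lp a p c).aemeasurable (meas_lp a p' d).aemeasurable
      _ = ENNReal.ofReal c0⁻¹ * tentSeqNorm ζ a p q c * tentSeqNorm ζ a p' q' d := by
          simp only [tentSeqNorm, if_neg hq', if_neg hq't]
          ring
  have hfin : (∑' j, (‖c j‖₊ : ℝ≥0∞) * (‖d j‖₊ : ℝ≥0∞) * ENNReal.ofReal (1 - ‖a j‖ ^ 2)) ≠ ∞ :=
    ne_top_of_le_ne_top
      (ENNReal.mul_ne_top (ENNReal.mul_ne_top ENNReal.ofReal_ne_top hcN) hdN) key
  have hsummable : Summable fun j => ‖c j‖ * ‖d j‖ * (1 - ‖a j‖ ^ 2) := by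
    refine (ENNReal.summable_toReal hfin).congr fun j => ?_
    rw [ENNReal.toReal_mul, ENNReal.toReal_mul, ENNReal.coe_toReal, ENNReal.coe_toReal,
      ENNReal.toReal_ofReal (hnn j), coe_nnnorm, coe_nnnorm]
  refine ⟨hsummable, ?_⟩
  have hnorm_eq : ∀ j, ‖c j * d j * ((1 : ℂ) - (‖a j‖ : ℂ) ^ 2)‖
      = ‖c j‖ * ‖d j‖ * (1 - ‖a j‖ ^ 2) := by
    intro j
    have h1 : ((1 : ℂ) - (‖a j‖ : ℂ) ^ 2) = ((1 - ‖a j‖ ^ 2 : ℝ) : ℂ) := by push_cast; ring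
    rw [norm_mul, norm_mul, h1, Complex.norm_real, Real.norm_eq_abs, abs_of_nonneg (hnn j)]
  have hs2 : Summable fun j => ‖c j * d j * ((1 : ℂ) - (‖a j‖ : ℂ) ^ 2)‖₊ := by
    rw [← NNReal.summable_coe]
    refine hsummable.congr fun j => ?_
    rw [coe_nnnorm, hnorm_eq j]
  have hsum_eq : ∀ j, (‖c j * d j * ((1 : ℂ) - (‖a j‖ : ℂ) ^ 2)‖₊ : ℝ≥0∞)
      = (‖c j‖₊ : ℝ≥0∞) * (‖d j‖₊ : ℝ≥0∞) * ENNReal.ofReal (1 - ‖a j‖ ^ 2) := by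
    intro j
    have h1 : ((1 : ℂ) - (‖a j‖ : ℂ) ^ 2) = ((1 - ‖a j‖ ^ 2 : ℝ) : ℂ) := by push_cast; ring
    rw [h1, nnnorm_mul, nnnorm_mul, ENNReal.coe_mul, ENNReal.coe_mul, Complex.nnnorm_real,
      ← Real.enorm_eq_ofReal (hnn j), enorm_eq_nnnorm]
  calc (‖∑' j, c j * d j * ((1 : ℂ) - (‖a j‖ : ℂ) ^ 2)‖₊ : ℝ≥0∞)
      ≤ (↑(∑' j, ‖c j * d j * ((1 : ℂ) - (‖a j‖ : ℂ) ^ 2)‖₊) : ℝ≥0∞) :=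
        ENNReal.coe_le_coe.2 (nnnorm_tsum_le hs2)
    _ = ∑' j, (‖c j * d j * ((1 : ℂ) - (‖a j‖ : ℂ) ^ 2)‖₊ : ℝ≥0∞) := ENNReal.coe_tsum hs2
    _ = ∑' j, (‖c j‖₊ : ℝ≥0∞) * (‖d j‖₊ : ℝ≥0∞) * ENNReal.ofReal (1 - ‖a j‖ ^ 2) :=
        tsum_congr hsum_eq
    _ ≤ _ := key
end
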